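/- Let U be a finite type and let Prod : Finset U → Set (Finset U) be monotone, i.e., D ⊆ E implies Prod D ⊆ Prod E. Define the step relation on Finset U by: D steps to D ∪ W for each W ∈ Prod D, and let reachability be the reflexive-transitive closure of this relation. Then for every D₀ : Finset U: (a) if D₁ and D₂ are both reachable from D₀, then there exists D₃ reachable from D₁ (hence from D₀) with D₂ ⊆ D₃; and (b) there is a greatest reachable database, i.e., a D* reachable from D₀ such that D' ⊆ D* for every D' reachable from D₀. -/

import Mathlib

/-- The step relation: a database `D` steps to `D ∪ W` for each `W ∈ Pr D`. -/
def ProdStep {U : Type} [DecidableEq U] (Pr : Finset U → Set (Finset U))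
    (D E : Finset U) : Prop :=
  ∃ W ∈ Pr D, E = D ∪ W

private lemma prodstep_grow {U : Type} [DecidableEq U] {Pr : Finset U → Set (Finset U)}
    {A B : Finset U} (h : Relation.ReflTransGen (ProdStep Pr) A B) : A ⊆ B := by
  induction h with
  | refl => exact subset_rfl
  | tail _ hstep ih =>
    obtain ⟨W, _, rfl⟩ := hstep
    exact ih.trans Finset.subset_union_left

private lemma prodstep_lift {U : Type} [DecidableEq U] {Pr : Finset U → Set (Finset U)}
    (hmono : ∀ D E : Finset U, D ⊆ E → Pr D ⊆ Pr E)
    {A B : Finset U} (h : Relation.ReflTransGen (ProdStep Pr) A B) :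
    ∀ C : Finset U, A ⊆ C →
      ∃ C' : Finset U, Relation.ReflTransGen (ProdStep Pr) C C' ∧ B ⊆ C' := by
  induction h with
  | refl => exact fun C hC => ⟨C, Relation.ReflTransGen.refl, hC⟩
  | tail _ hstep ih =>
    intro C hC
    obtain ⟨C', hC', hb⟩ := ih C hC
    obtain ⟨W, hW, rfl⟩ := hstep
    exact ⟨C' ∪ W, hC'.tail ⟨W, hmono _ _ hb hW, rfl⟩,
      Finset.union_subset_union hb subset_rfl⟩

theorem monotone_prod_directed_and_greatest (U : Type) [Fintype U] [DecidableEq U]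
    (Pr : Finset U → Set (Finset U))
    (hmono : ∀ D E : Finset U, D ⊆ E → Pr D ⊆ Pr E) (D₀ : Finset U) :
    (∀ D₁ D₂ : Finset U,
        Relation.ReflTransGen (ProdStep Pr) D₀ D₁ →
        Relation.ReflTransGen (ProdStep Pr) D₀ D₂ →
        ∃ D₃ : Finset U, Relation.ReflTransGen (ProdStep Pr) D₁ D₃ ∧ D₂ ⊆ D₃) ∧
    (∃ Dstar : Finset U,
        Relation.ReflTransGen (ProdStep Pr) D₀ Dstar ∧
        ∀ D' : Finset U, Relation.ReflTransGen (ProdStep Pr) D₀ D' → D' ⊆ Dstar) := by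
  have dir : ∀ D₁ D₂ : Finset U,
      Relation.ReflTransGen (ProdStep Pr) D₀ D₁ →
      Relation.ReflTransGen (ProdStep Pr) D₀ D₂ →
      ∃ D₃ : Finset U, Relation.ReflTransGen (ProdStep Pr) D₁ D₃ ∧ D₂ ⊆ D₃ := by
    intro D₁ D₂ h₁ h₂
    exact prodstep_lift hmono h₂ D₁ (prodstep_grow h₁)
  refine ⟨dir, ?_⟩
  have hfin : (setOf (Relation.ReflTransGen (ProdStep Pr) D₀)).Finite := Set.toFinite _
  obtain ⟨Dstar, hDstar, hmax'⟩ := hfin.exists_maximalFor id _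
    ⟨D₀, Relation.ReflTransGen.refl⟩
  have hmax : ∀ a, Relation.ReflTransGen (ProdStep Pr) D₀ a → Dstar ⊆ a → Dstar = a :=
    fun a ha h => Finset.Subset.antisymm h (hmax' ha h)
  refine ⟨Dstar, hDstar, fun D' hD' => ?_⟩
  obtain ⟨D₃, h₃, hsub⟩ := dir Dstar D' hDstar hD'
  have h₃0 : Relation.ReflTransGen (ProdStep Pr) D₀ D₃ := hDstar.trans h₃
  have := hmax D₃ h₃0 (prodstep_grow h₃)
  exact (show D₃ = Dstar from this.symm) ▸ hsub
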